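/- arXiv:0804.1886 — 4 statements merged into one kernel-verified Lean document; each statement's English description precedes it below -/
import Mathlib

section
/- Let A be a commutative ring, π ∈ A, and let R be the n×n matrix in block form (block sizes s, s, r-s, with s ≤ r, n = r+s): R = [[0, π² I_s, 0], [I_s, 0, 0], [a', π a', -π I_{r-s}]] for an arbitrary (r-s)×s matrix a'. Then every (s+1)×(s+1) minor of R + π I_n vanishes, and every (r+1)×(r+1) minor of R - π I_n vanishes. -/
open Matrix

lemma det_row_prop {n R : Type*} [DecidableEq n] [Fintype n] [CommRing R]
    {M : Matrix n n R} {i j : n} (hij : i ≠ j) (c : R) (h : ∀ k, M i k = c * M j k) :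
    M.det = 0 := by
  have hM : M = M.updateRow i (c • M j) := by
    ext a b
    rcases eq_or_ne a i with rfl | ha
    · simp [h b]
    · simp [Matrix.updateRow_ne ha]
  rw [hM, Matrix.det_updateRow_smul]
  have : (M.updateRow i (M j)).det = 0 := by
    apply Matrix.det_zero_of_row_eq hij
    simp [Matrix.updateRow_ne (Ne.symm hij)]
  rw [this, mul_zero]

lemma det_col_prop {n R : Type*} [DecidableEq n] [Fintype n] [CommRing R]
    {M : Matrix n n R} {i j : n} (hij : i ≠ j) (c : R) (h : ∀ k, M k i = c * M k j) :
    M.det = 0 := by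
  rw [← Matrix.det_transpose]
  exact det_row_prop hij c h

/-- The matrix `R` in block form with rows/columns of sizes `(s, s, r-s)`:
`R = [[0, π² I_s, 0], [I_s, 0, 0], [a', π a', -π I_{r-s}]]`. -/
noncomputable def Rmat (A : Type*) [CommRing A] (r s : ℕ) (π : A)
    (a' : Matrix (Fin (r - s)) (Fin s) A) :
    Matrix (Fin s ⊕ (Fin s ⊕ Fin (r - s))) (Fin s ⊕ (Fin s ⊕ Fin (r - s))) A :=
  Matrix.fromBlocks 0 (Matrix.fromCols (π ^ 2 • (1 : Matrix (Fin s) (Fin s) A)) 0)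
    (Matrix.fromRows (1 : Matrix (Fin s) (Fin s) A) a')
    (Matrix.fromBlocks 0 0 (π • a') (-(π • (1 : Matrix (Fin (r - s)) (Fin (r - s)) A))))

/-- Every `(s+1)×(s+1)` minor of `R + π I` vanishes, and every `(r+1)×(r+1)` minor of
`R - π I` vanishes. -/
theorem stmt5 (A : Type*) [CommRing A] (r s : ℕ) (hrs : s ≤ r) (π : A)
    (a' : Matrix (Fin (r - s)) (Fin s) A) :
    (∀ (f g : Fin (s + 1) → Fin s ⊕ (Fin s ⊕ Fin (r - s))),
      Function.Injective f → Function.Injective g →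
      ((Rmat A r s π a' + π • 1).submatrix f g).det = 0) ∧
    (∀ (f g : Fin (r + 1) → Fin s ⊕ (Fin s ⊕ Fin (r - s))),
      Function.Injective f → Function.Injective g →
      ((Rmat A r s π a' - π • 1).submatrix f g).det = 0) := by
  constructor
  · -- (s+1) minors of R + πI
    intro f g hf hg
    -- column `inr (inr l)` of `R + πI` is zero
    have hzero : ∀ (l : Fin (r - s)) (x : Fin s ⊕ (Fin s ⊕ Fin (r - s))),
        (Rmat A r s π a' + π • 1) x (Sum.inr (Sum.inr l)) = 0 := by
      intro l x
      rcases x with i | i | k <;> simp [Rmat, Matrix.one_apply]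
    -- column `inr (inl a)` is π times column `inl a`
    have hcol : ∀ (a : Fin s) (x : Fin s ⊕ (Fin s ⊕ Fin (r - s))),
        (Rmat A r s π a' + π • 1) x (Sum.inr (Sum.inl a)) =
          π * (Rmat A r s π a' + π • 1) x (Sum.inl a) := by
      intro a x
      rcases x with i | i | k <;>
        (simp [Rmat, Matrix.one_apply]; try (split <;> ring))
    by_cases hz : ∃ j l, g j = Sum.inr (Sum.inr l)
    · obtain ⟨j, l, hj⟩ := hz
      apply Matrix.det_eq_zero_of_column_eq_zero j
      intro i
      simp [Matrix.submatrix_apply, hj, hzero]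
    · push_neg at hz
      have hex : ∀ j, ∃ a : Fin s, g j = Sum.inl a ∨ g j = Sum.inr (Sum.inl a) := by
        intro j
        rcases hgj : g j with a | a | l
        · exact ⟨a, Or.inl rfl⟩
        · exact ⟨a, Or.inr rfl⟩
        · exact absurd hgj (hz j l)
      choose p hp using hex
      obtain ⟨j₁, j₂, hne, hpe⟩ :=
        Fintype.exists_ne_map_eq_of_card_lt p (by simp)
      have hgne : g j₁ ≠ g j₂ := fun h => hne (hg h)
      rcases hp j₁ with h₁ | h₁ <;> rcases hp j₂ with h₂ | h₂
      · exact absurd (h₁.trans (hpe ▸ h₂.symm)) hgne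
      · -- g j₁ = inl a, g j₂ = inr (inl a): column j₂ = π • column j₁
        apply det_col_prop (Ne.symm hne) π
        intro k
        simp only [Matrix.submatrix_apply, h₁, h₂, hpe]
        exact hcol (p j₂) (f k)
      · apply det_col_prop hne π
        intro k
        simp only [Matrix.submatrix_apply, h₁, h₂, ← hpe]
        exact hcol (p j₁) (f k)
      · exact absurd (h₁.trans (hpe ▸ h₂.symm)) hgne
  · -- (r+1) minors of R - πI
    intro f g hf hg
    -- row `inl a` is (-π) times row `inr (inl a)`
    have hrow : ∀ (a : Fin s) (y : Fin s ⊕ (Fin s ⊕ Fin (r - s))),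
        (Rmat A r s π a' - π • 1) (Sum.inl a) y =
          (-π) * (Rmat A r s π a' - π • 1) (Sum.inr (Sum.inl a)) y := by
      intro a y
      rcases y with i | i | k <;>
        (simp [Rmat, Matrix.one_apply, Matrix.sub_apply]; try (split <;> ring))
    set q : Fin s ⊕ (Fin s ⊕ Fin (r - s)) → Fin s ⊕ Fin (r - s) :=
      Sum.elim Sum.inl (Sum.elim Sum.inl Sum.inr) with hq
    obtain ⟨j₁, j₂, hne, hpe⟩ :=
      Fintype.exists_ne_map_eq_of_card_lt (fun j => q (f j))
        (by simp [Nat.add_sub_cancel' hrs])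
    have hfne : f j₁ ≠ f j₂ := fun h => hne (hf h)
    rcases h₁ : f j₁ with a | a | l <;> rcases h₂ : f j₂ with b | b | m <;>
        simp only [h₁, h₂, hq, Sum.elim_inl, Sum.elim_inr] at hpe
    · obtain rfl : a = b := Sum.inl_injective hpe
      exact absurd (h₁.trans h₂.symm) hfne
    · -- f j₁ = inl a, f j₂ = inr (inl b), a = b
      obtain rfl : a = b := Sum.inl_injective hpe
      apply det_row_prop hne (-π)
      intro k
      simp only [Matrix.submatrix_apply, h₁, h₂]
      exact hrow a (g k)
    · simp at hpe
    · obtain rfl : a = b := Sum.inl_injective hpe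
      apply det_row_prop (Ne.symm hne) (-π)
      intro k
      simp only [Matrix.submatrix_apply, h₁, h₂]
      exact hrow a (g k)
    · obtain rfl : a = b := Sum.inl_injective hpe
      exact absurd (h₁.trans h₂.symm) hfne
    · simp at hpe
    · simp at hpe
    · simp at hpe
    · obtain rfl : l = m := Sum.inr_injective hpe
      exact absurd (h₁.trans h₂.symm) hfne
end

section
/- Let k be a field, m ≥ 1, J = J_{2m} the standard antisymmetric form. If X₁ is a 2m×2m matrix with X₁² = 0 and X₁ + J X₁^t J = 0 (i.e., J X₁ is a symmetric matrix), then the rank of X₁ is even. -/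
open Matrix

/-- The standard antisymmetric matrix `J_N` (for `N = 2m`), with `J² = -I`, `Jᵀ = -J`. -/
def Jstd (k : Type*) [Field k] (N : ℕ) : Matrix (Fin N) (Fin N) k :=
  Matrix.of fun i j =>
    if (i : ℕ) + (j : ℕ) = N - 1 then (if (i : ℕ) < N / 2 then 1 else -1) else 0

lemma Jstd_transpose (k : Type*) [Field k] (m : ℕ) :
    (Jstd k (2 * m))ᵀ = -(Jstd k (2 * m)) := by
  ext i j
  have hi := i.isLt; have hj := j.isLt
  simp only [transpose_apply, Jstd, of_apply, Matrix.neg_apply]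
  by_cases h : (i : ℕ) + j = 2 * m - 1
  · rw [if_pos (by omega), if_pos h]
    by_cases him : (i : ℕ) < 2 * m / 2
    · rw [if_pos him, if_neg (by omega)]
    · rw [if_neg him, if_pos (by omega)]; norm_num
  · rw [if_neg (by omega), if_neg h, neg_zero]

lemma Jstd_sq (k : Type*) [Field k] (m : ℕ) (hm : 1 ≤ m) :
    Jstd k (2 * m) * Jstd k (2 * m) = -1 := by
  ext i j
  have hi := i.isLt; have hj := j.isLt
  rw [mul_apply, Finset.sum_eq_single (⟨2 * m - 1 - i, by omega⟩ : Fin (2 * m))]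
  · simp only [Jstd, of_apply, Matrix.neg_apply, one_apply]
    by_cases hij : i = j
    · subst hij
      rw [if_pos rfl]
      rw [if_pos (show (i : ℕ) + (2 * m - 1 - i) = 2 * m - 1 by omega),
        if_pos (show (2 * m - 1 - (i : ℕ)) + i = 2 * m - 1 by omega)]
      by_cases him : (i : ℕ) < 2 * m / 2
      · rw [if_pos him, if_neg (show ¬(2 * m - 1 - (i : ℕ) < 2 * m / 2) by omega)]; ring
      · rw [if_neg him, if_pos (show (2 * m - 1 - (i : ℕ)) < 2 * m / 2 by omega)]; ring
    · rw [if_neg hij,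
        if_neg (show ¬((2 * m - 1 - (i : ℕ)) + j = 2 * m - 1) from
          fun h => hij (Fin.ext (by omega))), mul_zero, neg_zero]
  · intro b _ hb
    simp only [Jstd, of_apply]
    rw [if_neg (show ¬((i : ℕ) + b = 2 * m - 1) by
      intro h
      apply hb
      apply Fin.ext
      show (b : ℕ) = 2 * m - 1 - (i : ℕ)
      omega), zero_mul]
  · intro h; exact absurd (Finset.mem_univ _) h

/-- A skew-symmetric matrix over a field of characteristic ≠ 2 has even rank. -/
lemma skew_rank_even {k : Type*} [Field k] (hchar : (2 : k) ≠ 0) {n : ℕ}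
    (S : Matrix (Fin n) (Fin n) k) (hS : Sᵀ = -S) : Even S.rank := by
  classical
  set B := Matrix.toBilin' S with hBdef
  have hvec : ∀ x : Fin n → k, x ᵥ* S = -(S *ᵥ x) := by
    intro x
    rw [← Matrix.mulVec_transpose, hS, Matrix.neg_mulVec]
  have hBskew : ∀ x y, B x y = -(B y x) := by
    intro x y
    rw [hBdef, Matrix.toBilin'_apply', Matrix.toBilin'_apply', Matrix.dotProduct_mulVec,
      hvec, neg_dotProduct, dotProduct_comm]
  set K := LinearMap.ker S.mulVecLin with hK
  obtain ⟨W, hW⟩ := Submodule.exists_isCompl K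
  have hnd : (B.restrict W).Nondegenerate := by
    suffices hL : (B.restrict W).SeparatingLeft from ⟨hL, fun y hy => hL y fun x => by
      have : B x y = 0 := hy x; change B y x = 0; rw [hBskew, this, neg_zero]⟩
    rintro ⟨x, hx⟩ h
    have hall : ∀ y : Fin n → k, B x y = 0 := by
      intro y
      obtain ⟨a, b, ha, hb, rfl⟩ :=
        Submodule.codisjoint_iff_exists_add_eq.mp hW.codisjoint.symm y
      have h1 : B x a = 0 := h ⟨a, ha⟩
      have h2 : B x b = 0 := by
        have : S *ᵥ b = 0 := hb
        rw [hBdef, Matrix.toBilin'_apply', this, dotProduct_zero]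
      rw [map_add, h1, h2, add_zero]
    have hxK : x ∈ K := by
      have hv : x ᵥ* S = 0 := by
        funext j
        have := hall (Pi.single j 1)
        rwa [hBdef, Matrix.toBilin'_apply', Matrix.dotProduct_mulVec,
          dotProduct_single, mul_one] at this
      have := hvec x
      rw [hv] at this
      have : S *ᵥ x = 0 := by
        have := this.symm
        rwa [neg_eq_zero] at this
      exact this
    have : x = 0 := by
      have := hW.disjoint.le_bot (Submodule.mem_inf.mpr ⟨hxK, hx⟩)
      simpa using this
    exact Subtype.ext this
  set d := Module.finrank k W with hd
  let b : Module.Basis (Fin d) k W := Module.finBasis k W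
  set M := LinearMap.BilinForm.toMatrix b (B.restrict W) with hM
  have hdet : M.det ≠ 0 := (LinearMap.BilinForm.nondegenerate_iff_det_ne_zero b).mp hnd
  have hMskew : Mᵀ = -M := by
    ext i j
    simp only [transpose_apply, Matrix.neg_apply, hM, LinearMap.BilinForm.toMatrix_apply]
    simp only [LinearMap.BilinForm.restrict_apply, LinearMap.domRestrict_apply]
    exact hBskew _ _
  have hdeven : Even d := by
    by_contra hodd
    rw [Nat.not_even_iff_odd] at hodd
    have h1 : M.det = -M.det := by
      conv_lhs => rw [← Matrix.det_transpose, hMskew]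
      rw [Matrix.det_neg, Fintype.card_fin, hodd.neg_one_pow, neg_one_mul]
    have h2 : (2 : k) * M.det = 0 := by
      rw [two_mul]
      nth_rewrite 1 [h1]
      rw [neg_add_cancel]
    exact hdet ((mul_eq_zero.mp h2).resolve_left hchar)
  have hrank : S.rank = d := by
    have h1 : S.rank + Module.finrank k K = n := by
      have := LinearMap.finrank_range_add_finrank_ker S.mulVecLin
      simpa [Matrix.rank, hK] using this
    have h2 : d + Module.finrank k K = n := by
      have := Submodule.finrank_add_eq_of_isCompl hW.symm
      simpa [hd] using this
    omega
  rw [hrank]; exact hdeven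

/-- If `X₁² = 0` and `X₁ + J X₁ᵀ J = 0`, then the rank of `X₁` is even. -/
theorem stmt8 (k : Type*) [Field k] (hchar : (2 : k) ≠ 0) (m : ℕ) (hm : 1 ≤ m)
    (X₁ : Matrix (Fin (2 * m)) (Fin (2 * m)) k)
    (hsq : X₁ * X₁ = 0)
    (hskew : X₁ + Jstd k (2 * m) * X₁ᵀ * Jstd k (2 * m) = 0) :
    Even X₁.rank := by
  set J := Jstd k (2 * m) with hJ
  have hJT : Jᵀ = -J := Jstd_transpose k m
  have hJJ : J * J = -1 := Jstd_sq k m hm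
  have hcomm : J * X₁ = X₁ᵀ * J := by
    have h := congrArg (J * ·) hskew
    simp only [Matrix.mul_add, Matrix.mul_zero, ← Matrix.mul_assoc, hJJ, neg_one_mul,
      Matrix.neg_mul] at h
    exact add_neg_eq_zero.mp h
  have hskewS : (J * X₁)ᵀ = -(J * X₁) := by
    rw [Matrix.transpose_mul, hJT, Matrix.mul_neg, hcomm]
  have hdetJ : IsUnit J.det := by
    have : J.det * J.det = 1 := by
      rw [← Matrix.det_mul, hJJ]
      simp [Matrix.det_neg, Fintype.card_fin]
    exact IsUnit.of_mul_eq_one _ this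
  have hrank : (J * X₁).rank = X₁.rank :=
    Matrix.rank_mul_eq_right_of_isUnit_det J X₁ hdetJ
  have := skew_rank_even hchar (J * X₁) hskewS
  rwa [hrank] at this
end

section
/- Let k be a field of characteristic ≠ 2, m ≥ 1, and write n = 2m+1. Let c₀ = (1,0,…,0) ∈ k^{2m} and let X₁ be a 2m×2m matrix over k satisfying: (i) c₀ X₁ = 0 (row condition coming from X₃ X₁ = 0 with X₃ = c₀), and (ii) X₁ + σ(X₁) = -J c₀^t c₀, where σ(B) = J B^t J and J = J_{2m}. Then X₁ has the block form (block sizes 1, 2m-2, 1): first row zero; middle rows equal to (σ(Y₂)^t-column, Y₁, 0); last row (1/2, Y₂, 0); where Y₁ is a (2m-2)×(2m-2) matrix with Y₁ + σ'(Y₁) = 0 (σ' the analogous involution in size 2m-2) and Y₂ an arbitrary row vector of length 2m-2. -/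
open Matrix

lemma Jstd_apply (k : Type*) [Field k] (N : ℕ) (i j : Fin N) :
    Jstd k N i j
      = if (j : ℕ) = N - 1 - (i : ℕ) then (if (i : ℕ) < N / 2 then (1 : k) else -1) else 0 := by
  have hi := i.isLt; have hj := j.isLt
  simp only [Jstd, of_apply]
  by_cases h : (i : ℕ) + (j : ℕ) = N - 1
  · have h' : (j : ℕ) = N - 1 - (i : ℕ) := by omega
    rw [if_pos h, if_pos h']
  · have h' : ¬((j : ℕ) = N - 1 - (i : ℕ)) := by omega
    rw [if_neg h, if_neg h']

lemma Jstd_mulVec (k : Type*) [Field k] (N : ℕ) (v : Fin N → k) (i : Fin N) :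
    Matrix.mulVec (Jstd k N) v i
      = (if (i : ℕ) < N / 2 then (1 : k) else -1) * v ⟨N - 1 - (i : ℕ), by have := i.isLt; omega⟩ := by
  have hi := i.isLt
  rw [Matrix.mulVec, dotProduct]
  rw [Fintype.sum_eq_single (⟨N - 1 - (i : ℕ), by omega⟩ : Fin N)]
  · rw [Jstd_apply, if_pos rfl]
  · intro b hb
    rw [Jstd_apply, if_neg, zero_mul]
    exact fun h => hb (Fin.ext h)

lemma Jconj (k : Type*) [Field k] (N : ℕ) (A : Matrix (Fin N) (Fin N) k) (i j : Fin N) :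
    (Jstd k N * Aᵀ * Jstd k N) i j
      = (if (i : ℕ) < N / 2 then (1 : k) else -1)
        * (if N - 1 - (j : ℕ) < N / 2 then (1 : k) else -1)
        * A ⟨N - 1 - (j : ℕ), by have := j.isLt; omega⟩
            ⟨N - 1 - (i : ℕ), by have := i.isLt; omega⟩ := by
  have hi := i.isLt; have hj := j.isLt
  have hmid : ∀ b : Fin N, (Jstd k N * Aᵀ) i b
      = (if (i : ℕ) < N / 2 then (1 : k) else -1) * A b ⟨N - 1 - (i : ℕ), by omega⟩ := by
    intro b
    rw [Matrix.mul_apply]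
    rw [Fintype.sum_eq_single (⟨N - 1 - (i : ℕ), by omega⟩ : Fin N)]
    · rw [Jstd_apply, if_pos rfl, transpose_apply]
    · intro a ha
      rw [Jstd_apply, if_neg, zero_mul]
      exact fun h => ha (Fin.ext h)
  rw [Matrix.mul_apply]
  rw [Fintype.sum_eq_single (⟨N - 1 - (j : ℕ), by omega⟩ : Fin N)]
  · rw [hmid, Jstd_apply]
    have hc : (j : ℕ) = N - 1 - ((⟨N - 1 - (j : ℕ), by omega⟩ : Fin N) : ℕ) := by
      simp only [Fin.val_mk]; omega
    rw [if_pos hc]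
    have hc2 : ((⟨N - 1 - (j : ℕ), by omega⟩ : Fin N) : ℕ) = N - 1 - (j : ℕ) := rfl
    rw [hc2]
    ring
  · intro b hb
    rw [Jstd_apply, if_neg, mul_zero]
    intro h
    exact hb (Fin.ext (show (b : ℕ) = N - 1 - (j : ℕ) by have := b.isLt; omega))

set_option maxHeartbeats 1000000 in
/-- Block description of the matrices `X₁` lying in the fiber over `c₀`: if
`c₀ X₁ = 0` and `X₁ + σ(X₁) = -J c₀ᵀ c₀` (with `σ(B) = J Bᵀ J`), then `X₁` has the
block form with first row zero, last column zero, lower-left entry `1/2`, last row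
middle part an arbitrary vector `Y₂`, first column middle part `σ(Y₂) = J_{2m-2} Y₂ᵀ`,
and middle block `Y₁` satisfying `Y₁ + σ'(Y₁) = 0`. -/
theorem stmt11 (k : Type*) [Field k] [IsAlgClosed k] (hchar : (2 : k) ≠ 0)
    (m : ℕ) (hm : 1 ≤ m)
    (X₁ : Matrix (Fin (2 * m)) (Fin (2 * m)) k)
    (c₀ : Fin (2 * m) → k) (hc₀ : c₀ = fun j : Fin (2 * m) => if (j : ℕ) = 0 then (1 : k) else 0)
    (hrow : Matrix.vecMul c₀ X₁ = 0)
    (hsym : X₁ + Jstd k (2 * m) * X₁ᵀ * Jstd k (2 * m)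
      = -(Jstd k (2 * m) * Matrix.vecMulVec c₀ c₀)) :
    ∃ (Y₁ : Matrix (Fin (2 * m - 2)) (Fin (2 * m - 2)) k) (Y₂ : Fin (2 * m - 2) → k),
      Y₁ + Jstd k (2 * m - 2) * Y₁ᵀ * Jstd k (2 * m - 2) = 0 ∧
      (∀ j, X₁ ⟨0, by omega⟩ j = 0) ∧
      (∀ i, X₁ i ⟨2 * m - 1, by omega⟩ = 0) ∧
      X₁ ⟨2 * m - 1, by omega⟩ ⟨0, by omega⟩ = 1 / 2 ∧
      (∀ j : Fin (2 * m - 2),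
        X₁ ⟨2 * m - 1, by omega⟩ ⟨(j : ℕ) + 1, by have := j.isLt; omega⟩ = Y₂ j) ∧
      (∀ i : Fin (2 * m - 2),
        X₁ ⟨(i : ℕ) + 1, by have := i.isLt; omega⟩ ⟨0, by omega⟩
          = Matrix.mulVec (Jstd k (2 * m - 2)) Y₂ i) ∧
      (∀ i j : Fin (2 * m - 2),
        X₁ ⟨(i : ℕ) + 1, by have := i.isLt; omega⟩ ⟨(j : ℕ) + 1, by have := j.isLt; omega⟩
          = Y₁ i j) := by
  subst hc₀
  have h2m : 0 < 2 * m := by omega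
  have hhalf : 2 * m / 2 = m := by omega
  have hhalf2 : (2 * m - 2) / 2 = m - 1 := by omega
  -- row 0 of X₁ vanishes
  have hrow0 : ∀ j, X₁ ⟨0, h2m⟩ j = 0 := by
    intro j
    have h := congrFun hrow j
    rw [Matrix.vecMul, dotProduct] at h
    rw [Fintype.sum_eq_single (⟨0, h2m⟩ : Fin (2 * m))] at h
    · simpa using h
    · intro b hb
      rw [if_neg, zero_mul]
      exact fun hb0 => hb (Fin.ext hb0)
  -- entrywise form of the symmetry equation
  have hE : ∀ (a b : ℕ) (ha : a < 2 * m) (hb : b < 2 * m),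
      X₁ ⟨a, ha⟩ ⟨b, hb⟩
        + (if a < m then (1 : k) else -1) * (if 2 * m - 1 - b < m then (1 : k) else -1)
          * X₁ ⟨2 * m - 1 - b, by omega⟩ ⟨2 * m - 1 - a, by omega⟩
        = if a = 2 * m - 1 ∧ b = 0 then 1 else 0 := by
    intro a b ha hb
    have h := congrFun (congrFun hsym ⟨a, ha⟩) ⟨b, hb⟩
    rw [Matrix.add_apply, Jconj, hhalf] at h
    rw [Matrix.neg_apply, Matrix.mul_apply] at h
    rw [Fintype.sum_eq_single (⟨0, h2m⟩ : Fin (2 * m))] at h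
    · rw [Matrix.vecMulVec_apply, Jstd_apply, hhalf] at h
      simp only [Fin.val_mk] at h
      split_ifs at h ⊢ <;> first | omega | exact h.trans (by norm_num)
    · intro c hc
      rw [Matrix.vecMulVec_apply]
      rw [if_neg (fun h0 => hc (Fin.ext h0)), zero_mul, mul_zero]
  -- claims
  have claim1 : ∀ j, X₁ ⟨0, by omega⟩ j = 0 := hrow0
  have claim2 : ∀ i : Fin (2 * m), X₁ i ⟨2 * m - 1, by omega⟩ = 0 := by
    intro i
    have h := hE (i : ℕ) (2 * m - 1) i.isLt (by omega)
    have h0 : X₁ ⟨2 * m - 1 - (2 * m - 1), by omega⟩ ⟨2 * m - 1 - (i : ℕ), by omega⟩ = 0 := by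
      have e : (⟨2 * m - 1 - (2 * m - 1), by omega⟩ : Fin (2 * m)) = ⟨0, h2m⟩ :=
        Fin.ext (show 2 * m - 1 - (2 * m - 1) = 0 by omega)
      rw [e]; exact hrow0 _
    rw [h0, mul_zero, add_zero] at h
    simp only [Fin.eta] at h
    rw [h]
    rw [if_neg (by omega)]
  have claim3 : ∀ (p : 2 * m - 1 < 2 * m) (q : 0 < 2 * m),
      X₁ ⟨2 * m - 1, p⟩ ⟨0, q⟩ = 1 / 2 := by
    intro p q
    have h := hE (2 * m - 1) 0 (by omega) (by omega)
    have he : (⟨2 * m - 1 - 0, by omega⟩ : Fin (2 * m)) = ⟨2 * m - 1, p⟩ :=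
      Fin.ext (show 2 * m - 1 - 0 = 2 * m - 1 by omega)
    have he2 : (⟨2 * m - 1 - (2 * m - 1), by omega⟩ : Fin (2 * m)) = ⟨0, q⟩ :=
      Fin.ext (show 2 * m - 1 - (2 * m - 1) = 0 by omega)
    rw [he, he2] at h
    have h' : X₁ ⟨2 * m - 1, p⟩ ⟨0, q⟩
        + (if 2 * m - 1 < m then (1 : k) else -1) * (if 2 * m - 1 - 0 < m then (1 : k) else -1)
          * X₁ ⟨2 * m - 1, p⟩ ⟨0, q⟩
        = if 2 * m - 1 = 2 * m - 1 ∧ 0 = 0 then 1 else 0 := h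
    rw [if_neg (by omega), if_neg (by omega), if_pos ⟨rfl, rfl⟩] at h'
    rw [eq_div_iff hchar]
    linear_combination h'
  refine ⟨Matrix.of fun i j : Fin (2 * m - 2) =>
      X₁ ⟨(i : ℕ) + 1, by have := i.isLt; omega⟩ ⟨(j : ℕ) + 1, by have := j.isLt; omega⟩,
    fun j : Fin (2 * m - 2) =>
      X₁ ⟨2 * m - 1, by omega⟩ ⟨(j : ℕ) + 1, by have := j.isLt; omega⟩,
    ?_, claim1, claim2, claim3 _ _, fun _ => rfl, ?_, fun _ _ => rfl⟩
  · -- Y₁ + σ'(Y₁) = 0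
    ext i j
    have hi := i.isLt; have hj := j.isLt
    rw [Matrix.add_apply, Jconj, Matrix.zero_apply]
    simp only [Matrix.of_apply, Fin.val_mk]
    have h := hE ((i : ℕ) + 1) ((j : ℕ) + 1) (by omega) (by omega)
    have e1 : (⟨2 * m - 1 - ((j : ℕ) + 1), by omega⟩ : Fin (2 * m))
        = ⟨2 * m - 2 - 1 - (j : ℕ) + 1, by omega⟩ :=
      Fin.ext (show 2 * m - 1 - ((j : ℕ) + 1) = 2 * m - 2 - 1 - (j : ℕ) + 1 by omega)
    have e2 : (⟨2 * m - 1 - ((i : ℕ) + 1), by omega⟩ : Fin (2 * m))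
        = ⟨2 * m - 2 - 1 - (i : ℕ) + 1, by omega⟩ :=
      Fin.ext (show 2 * m - 1 - ((i : ℕ) + 1) = 2 * m - 2 - 1 - (i : ℕ) + 1 by omega)
    rw [e1, e2] at h
    split_ifs at h ⊢ <;> first | omega | linear_combination h
  · -- first column middle entries
    intro i
    have hi := i.isLt
    rw [Jstd_mulVec]
    simp only [Fin.val_mk]
    have h := hE ((i : ℕ) + 1) 0 (by omega) (by omega)
    have e1 : (⟨2 * m - 1 - 0, by omega⟩ : Fin (2 * m)) = ⟨2 * m - 1, by omega⟩ :=
      Fin.ext (show 2 * m - 1 - 0 = 2 * m - 1 by omega)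
    have e2 : (⟨2 * m - 1 - ((i : ℕ) + 1), by omega⟩ : Fin (2 * m))
        = ⟨2 * m - 2 - 1 - (i : ℕ) + 1, by omega⟩ :=
      Fin.ext (show 2 * m - 1 - ((i : ℕ) + 1) = 2 * m - 2 - 1 - (i : ℕ) + 1 by omega)
    rw [e1, e2] at h
    split_ifs at h ⊢ <;> first | omega | linear_combination h
end

section
/- Let A be a commutative ring, r ≥ s ≥ 0, m = (r+s-1)/2 with r+s = 2m+1 odd. Given an r×s matrix a over A, the system of equations a_{[s]} - ι(a_{[s]}) = ι((a_{[m]})^{[m-s]}) a^{[m-s]} - ι(a^{[m-s]}) (a_{[m]})^{[m-s]} (where a_{[s]} is the last s rows of a, a^{[m-s]} the first m-s rows, (a_{[m]})^{[m-s]} the first m-s rows of the last m rows, and ι(B) = H B^t H the antidiagonal reflection), with 2 invertible in A, has solution set naturally an affine space: the entries a_{i,j} with i ≤ r-s together with the entries with r-s+1 ≤ i ≤ r, 1 ≤ j ≤ r+1-i, can be chosen freely, and they uniquely determine the remaining entries. In particular over a field, the solution set is an affine space of dimension s(r-s) + s(s+1)/2. -/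
open Matrix

/-- The unit antidiagonal matrix `H_s`. -/
def Hmat (A : Type*) [CommRing A] (s : ℕ) : Matrix (Fin s) (Fin s) A :=
  Matrix.of fun i j => if (i : ℕ) + (j : ℕ) = s - 1 then 1 else 0

namespace Stmt16

variable {A : Type*} [CommRing A]

lemma Hmat_mul_apply {a b : ℕ} (X : Matrix (Fin a) (Fin b) A) (i : Fin a) (j : Fin b) :
    (Hmat A a * X) i j = X i.rev j := by
  rw [mul_apply, Finset.sum_eq_single i.rev]
  · have h : (i : ℕ) + (i.rev : ℕ) = a - 1 := by (try simp only [Fin.val_rev]); omega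
    simp only [Hmat, of_apply, if_pos h, one_mul]
  · intro p _ hp
    have h : ¬((i : ℕ) + (p : ℕ) = a - 1) := by
      intro h; apply hp; apply Fin.ext; (try simp only [Fin.val_rev]); omega
    simp only [Hmat, of_apply, if_neg h, zero_mul]
  · simp

lemma mul_Hmat_apply {a b : ℕ} (X : Matrix (Fin a) (Fin b) A) (i : Fin a) (j : Fin b) :
    (X * Hmat A b) i j = X i j.rev := by
  rw [mul_apply, Finset.sum_eq_single j.rev]
  · have h : (j.rev : ℕ) + (j : ℕ) = b - 1 := by (try simp only [Fin.val_rev]); omega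
    simp only [Hmat, of_apply, if_pos h, mul_one]
  · intro p _ hp
    have h : ¬((p : ℕ) + (j : ℕ) = b - 1) := by
      intro h; apply hp; apply Fin.ext; (try simp only [Fin.val_rev]); omega
    simp only [Hmat, of_apply, if_neg h, mul_zero]
  · simp

lemma key {a b c : ℕ} (X : Matrix (Fin c) (Fin a) A) (Y : Matrix (Fin c) (Fin b) A)
    (i : Fin a) (j : Fin b) :
    ((Hmat A a * Xᵀ * Hmat A c) * Y) i j = ∑ k : Fin c, X k.rev i.rev * Y k j := by
  rw [mul_apply]
  refine Finset.sum_congr rfl fun k _ => ?_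
  rw [mul_Hmat_apply, Hmat_mul_apply, transpose_apply]

variable {r s m : ℕ}

/-- value of the free "top" rows, as a function of the free data `v`. -/
def W (r s : ℕ) (v : {p : Fin r × Fin s // (p.1 : ℕ) < r - s ∨ (p.1 : ℕ) + (p.2 : ℕ) + 1 ≤ r} → A)
    (i : ℕ) (j : Fin s) : A :=
  if hi : i < r - s then v ⟨(⟨i, by omega⟩, j), Or.inl hi⟩ else 0

/-- the right-hand side of the equation, as a function of the free data. -/
def G (r s m : ℕ)
    (v : {p : Fin r × Fin s // (p.1 : ℕ) < r - s ∨ (p.1 : ℕ) + (p.2 : ℕ) + 1 ≤ r} → A)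
    (t j : Fin s) : A :=
  ∑ k : Fin (m - s),
    (W r s v (r - m + (k.rev : ℕ)) t.rev * W r s v (k : ℕ) j
      - W r s v (k.rev : ℕ) t.rev * W r s v (r - m + (k : ℕ)) j)

lemma G_antisymm (v : {p : Fin r × Fin s // (p.1 : ℕ) < r - s ∨ (p.1 : ℕ) + (p.2 : ℕ) + 1 ≤ r} → A)
    (t j : Fin s) : G r s m v j.rev t.rev = -G r s m v t j := by
  unfold G
  rw [← Finset.sum_neg_distrib]
  refine Fintype.sum_equiv Fin.revPerm _ _ fun k => ?_
  simp only [Fin.revPerm_apply, Fin.rev_rev]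
  ring

lemma G_diag (h2 : IsUnit (2 : A))
    (v : {p : Fin r × Fin s // (p.1 : ℕ) < r - s ∨ (p.1 : ℕ) + (p.2 : ℕ) + 1 ≤ r} → A)
    (t : Fin s) : G r s m v t t.rev = 0 := by
  have h := G_antisymm (r := r) (m := m) v t t.rev
  rw [Fin.rev_rev] at h
  have h4 : (2 : A) * G r s m v t t.rev = 0 := by linear_combination h
  exact (IsUnit.mul_right_eq_zero h2).mp h4

/-- The solution matrix. -/
def Amat (r s m : ℕ)
    (v : {p : Fin r × Fin s // (p.1 : ℕ) < r - s ∨ (p.1 : ℕ) + (p.2 : ℕ) + 1 ≤ r} → A) :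
    Matrix (Fin r) (Fin s) A :=
  Matrix.of fun i j =>
    if h : (i : ℕ) < r - s ∨ (i : ℕ) + (j : ℕ) + 1 ≤ r then v ⟨(i, j), h⟩
    else v ⟨(⟨r - 1 - (j : ℕ), by omega⟩, ⟨r - 1 - (i : ℕ), by omega⟩),
            Or.inr (show r - 1 - (j : ℕ) + (r - 1 - (i : ℕ)) + 1 ≤ r by omega)⟩
         + G r s m v ⟨(i : ℕ) - (r - s), by omega⟩ j

lemma Amat_free (v : {p : Fin r × Fin s // (p.1 : ℕ) < r - s ∨ (p.1 : ℕ) + (p.2 : ℕ) + 1 ≤ r} → A)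
    (i : Fin r) (j : Fin s) (h : (i : ℕ) < r - s ∨ (i : ℕ) + (j : ℕ) + 1 ≤ r) :
    Amat r s m v i j = v ⟨(i, j), h⟩ := by
  simp only [Amat, of_apply, dif_pos h]

lemma Amat_top (v : {p : Fin r × Fin s // (p.1 : ℕ) < r - s ∨ (p.1 : ℕ) + (p.2 : ℕ) + 1 ≤ r} → A)
    (i : Fin r) (j : Fin s) (h : (i : ℕ) < r - s) :
    Amat r s m v i j = W r s v (i : ℕ) j := by
  rw [Amat_free v i j (Or.inl h), W, dif_pos h]

lemma Amat_bot (v : {p : Fin r × Fin s // (p.1 : ℕ) < r - s ∨ (p.1 : ℕ) + (p.2 : ℕ) + 1 ≤ r} → A)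
    (x : ℕ) (hx : x < r) (j : Fin s) (h1 : r - s ≤ x) (hij : r < x + (j : ℕ) + 1) :
    Amat r s m v ⟨x, hx⟩ j
      = v ⟨(⟨r - 1 - (j : ℕ), by omega⟩, ⟨r - 1 - x, by omega⟩),
            Or.inr (show r - 1 - (j : ℕ) + (r - 1 - x) + 1 ≤ r by omega)⟩
        + G r s m v ⟨x - (r - s), by omega⟩ j := by
  have h : ¬(x < r - s ∨ x + (j : ℕ) + 1 ≤ r) := by omega
  simp only [Amat, of_apply]
  rw [dif_neg h]

/-- congruence for values of `v`. -/
lemma v_eq (v : {p : Fin r × Fin s // (p.1 : ℕ) < r - s ∨ (p.1 : ℕ) + (p.2 : ℕ) + 1 ≤ r} → A)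
    {x1 y1 x2 y2 : ℕ} (hx1 : x1 < r) (hy1 : y1 < s) (hx2 : x2 < r) (hy2 : y2 < s)
    (hp : x1 < r - s ∨ x1 + y1 + 1 ≤ r) (hq : x2 < r - s ∨ x2 + y2 + 1 ≤ r)
    (h1 : x1 = x2) (h2 : y1 = y2) :
    v ⟨(⟨x1, hx1⟩, ⟨y1, hy1⟩), hp⟩ = v ⟨(⟨x2, hx2⟩, ⟨y2, hy2⟩), hq⟩ := by
  subst h1; subst h2; rfl

lemma rhs_eq (hrs : s ≤ r) (hodd : r + s = 2 * m + 1)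
    (v : {p : Fin r × Fin s // (p.1 : ℕ) < r - s ∨ (p.1 : ℕ) + (p.2 : ℕ) + 1 ≤ r} → A)
    (a : Matrix (Fin r) (Fin s) A)
    (ha : ∀ (i : ℕ) (hi : i < r - s) (hir : i < r) (j : Fin s), a ⟨i, hir⟩ j = W r s v i j)
    (t j : Fin s) :
    (∑ k : Fin (m - s), a ⟨r - m + (k.rev : ℕ), by omega⟩ t.rev * a ⟨(k : ℕ), by omega⟩ j)
      - (∑ k : Fin (m - s), a ⟨(k.rev : ℕ), by omega⟩ t.rev * a ⟨r - m + (k : ℕ), by omega⟩ j)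
    = G r s m v t j := by
  unfold G
  rw [← Finset.sum_sub_distrib]
  refine Finset.sum_congr rfl fun k _ => ?_
  rw [ha (r - m + (k.rev : ℕ)) (by omega) (by omega) t.rev,
      ha ((k : ℕ)) (by omega) (by omega) j,
      ha ((k.rev : ℕ)) (by omega) (by omega) t.rev,
      ha (r - m + (k : ℕ)) (by omega) (by omega) j]

lemma equation_iff (hrs : s ≤ r) (hodd : r + s = 2 * m + 1)
    (v : {p : Fin r × Fin s // (p.1 : ℕ) < r - s ∨ (p.1 : ℕ) + (p.2 : ℕ) + 1 ≤ r} → A)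
    (a : Matrix (Fin r) (Fin s) A)
    (ha : ∀ (i : ℕ) (hi : i < r - s) (hir : i < r) (j : Fin s), a ⟨i, hir⟩ j = W r s v i j) :
    (a.submatrix (fun t : Fin s => (⟨r - s + (t : ℕ), by omega⟩ : Fin r)) id
        - Hmat A s * (a.submatrix (fun t : Fin s => (⟨r - s + (t : ℕ), by omega⟩ : Fin r)) id)ᵀ
            * Hmat A s =
      (Hmat A s * (a.submatrix (fun t : Fin (m - s) => (⟨r - m + (t : ℕ), by omega⟩ : Fin r)) id)ᵀ
          * Hmat A (m - s))
        * (a.submatrix (fun t : Fin (m - s) => (⟨(t : ℕ), by omega⟩ : Fin r)) id)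
      - (Hmat A s * (a.submatrix (fun t : Fin (m - s) => (⟨(t : ℕ), by omega⟩ : Fin r)) id)ᵀ
          * Hmat A (m - s))
        * (a.submatrix (fun t : Fin (m - s) => (⟨r - m + (t : ℕ), by omega⟩ : Fin r)) id))
    ↔ ∀ t j : Fin s,
        a ⟨r - s + (t : ℕ), by omega⟩ j - a ⟨r - s + (j.rev : ℕ), by omega⟩ t.rev
          = G r s m v t j := by
  constructor
  · intro h t j
    have h' := congrFun (congrFun h t) j
    simp only [Matrix.sub_apply, mul_Hmat_apply, Hmat_mul_apply, transpose_apply, key,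
      submatrix_apply, id_eq] at h'
    exact h'.trans (rhs_eq hrs hodd v a ha t j)
  · intro h
    ext t j
    simp only [Matrix.sub_apply, mul_Hmat_apply, Hmat_mul_apply, transpose_apply, key,
      submatrix_apply, id_eq]
    exact (h t j).trans (rhs_eq hrs hodd v a ha t j).symm

end Stmt16

open Stmt16

/-- The odd case `r + s = 2m + 1`: the solutions of the matrix equation
`a_{[s]} - ι(a_{[s]}) = ι((a_{[m]})^{[m-s]}) a^{[m-s]} - ι(a^{[m-s]}) (a_{[m]})^{[m-s]}`
form an affine space: the entries `a_{i,j}` with `i ≤ r - s` (1-indexed) together with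
those with `r-s+1 ≤ i ≤ r`, `1 ≤ j ≤ r+1-i` can be chosen freely and uniquely determine
the remaining entries; the number of free entries is `s(r-s) + s(s+1)/2`. -/
theorem stmt16 (A : Type*) [CommRing A] (r s m : ℕ) (hrs : s ≤ r)
    (hodd : r + s = 2 * m + 1) (h2 : IsUnit (2 : A)) :
    (∀ v : {p : Fin r × Fin s // (p.1 : ℕ) < r - s ∨ (p.1 : ℕ) + (p.2 : ℕ) + 1 ≤ r} → A,
      ∃! a : Matrix (Fin r) (Fin s) A,
        (let aS := a.submatrix
            (fun t : Fin s => (⟨r - s + (t : ℕ), by have := t.isLt; omega⟩ : Fin r)) id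
         let aT := a.submatrix
            (fun t : Fin (m - s) => (⟨(t : ℕ), by have := t.isLt; omega⟩ : Fin r)) id
         let aM := a.submatrix
            (fun t : Fin (m - s) => (⟨r - m + (t : ℕ), by have := t.isLt; omega⟩ : Fin r)) id
         aS - Hmat A s * aSᵀ * Hmat A s =
           (Hmat A s * aMᵀ * Hmat A (m - s)) * aT
             - (Hmat A s * aTᵀ * Hmat A (m - s)) * aM) ∧
        ∀ (p : Fin r × Fin s) (hp : (p.1 : ℕ) < r - s ∨ (p.1 : ℕ) + (p.2 : ℕ) + 1 ≤ r),
          a p.1 p.2 = v ⟨p, hp⟩) ∧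
    Nat.card {p : Fin r × Fin s // (p.1 : ℕ) < r - s ∨ (p.1 : ℕ) + (p.2 : ℕ) + 1 ≤ r}
      = s * (r - s) + s * (s + 1) / 2 := by
  constructor
  · intro v
    have hAtop : ∀ (i : ℕ) (hi : i < r - s) (hir : i < r) (j : Fin s),
        Amat r s m v ⟨i, hir⟩ j = W r s v i j := fun i hi hir j => Amat_top v ⟨i, hir⟩ j hi
    refine ⟨Amat r s m v, ⟨?_, ?_⟩, ?_⟩
    · -- the equation
      refine (equation_iff hrs hodd v (Amat r s m v) hAtop).mpr ?_
      intro t j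
      rcases lt_trichotomy ((t : ℕ) + (j : ℕ)) (s - 1) with hc | hc | hc
      · -- strictly above the antidiagonal
        rw [Amat_free v _ j (Or.inr (show r - s + (t : ℕ) + (j : ℕ) + 1 ≤ r by omega))]
        rw [Amat_bot v (r - s + (j.rev : ℕ)) (by omega) t.rev
          (by omega) (by (try simp only [Fin.val_rev]); omega)]
        have e1 : v ⟨(⟨r - 1 - (t.rev : ℕ), by (try simp only [Fin.val_rev]); omega⟩,
              ⟨r - 1 - (r - s + (j.rev : ℕ)), by (try simp only [Fin.val_rev]); omega⟩),
              Or.inr (show r - 1 - (t.rev : ℕ) + (r - 1 - (r - s + (j.rev : ℕ))) + 1 ≤ r by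
                (try simp only [Fin.val_rev]); omega)⟩ =
            v ⟨(⟨r - s + (t : ℕ), by omega⟩, j),
              Or.inr (show r - s + (t : ℕ) + (j : ℕ) + 1 ≤ r by omega)⟩ :=
          v_eq v _ _ _ _ _ _ (by (try simp only [Fin.val_rev]); omega)
            (by (try simp only [Fin.val_rev]); omega)
        have e2 : (⟨r - s + (j.rev : ℕ) - (r - s), by omega⟩ : Fin s) = j.rev :=
          Fin.ext (by show r - s + (j.rev : ℕ) - (r - s) = (j.rev : ℕ); omega)
        rw [e2]
        have e3 := G_antisymm (r := r) (m := m) v t j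
        linear_combination - e1 - e3
      · -- on the antidiagonal
        have hj : j = t.rev := Fin.ext (by (try simp only [Fin.val_rev]); omega)
        subst hj
        have hrow : (⟨r - s + ((t.rev).rev : ℕ), by omega⟩ : Fin r)
            = ⟨r - s + (t : ℕ), by omega⟩ := Fin.ext (by
          show r - s + ((t.rev).rev : ℕ) = r - s + (t : ℕ); rw [Fin.rev_rev])
        rw [hrow, sub_self, G_diag h2]
      · -- strictly below the antidiagonal
        rw [Amat_bot v (r - s + (t : ℕ)) (by omega) j (by omega) (by omega)]
        rw [Amat_free v _ t.rev (Or.inr (show r - s + (j.rev : ℕ) + (t.rev : ℕ) + 1 ≤ r by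
          (try simp only [Fin.val_rev]); omega))]
        have e1 : v ⟨(⟨r - 1 - (j : ℕ), by omega⟩, ⟨r - 1 - (r - s + (t : ℕ)), by omega⟩),
              Or.inr (show r - 1 - (j : ℕ) + (r - 1 - (r - s + (t : ℕ))) + 1 ≤ r by omega)⟩ =
            v ⟨(⟨r - s + (j.rev : ℕ), by (try simp only [Fin.val_rev]); omega⟩, t.rev),
              Or.inr (show r - s + (j.rev : ℕ) + (t.rev : ℕ) + 1 ≤ r by
                (try simp only [Fin.val_rev]); omega)⟩ :=
          v_eq v _ _ _ _ _ _ (by (try simp only [Fin.val_rev]); omega)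
            (by (try simp only [Fin.val_rev]); omega)
        have e2 : (⟨r - s + (t : ℕ) - (r - s), by omega⟩ : Fin s) = t :=
          Fin.ext (by show r - s + (t : ℕ) - (r - s) = (t : ℕ); omega)
        rw [e2]
        linear_combination e1
    · -- agreement with the free data
      intro p hp
      rcases p with ⟨i, j⟩
      exact Amat_free v i j hp
    · -- uniqueness
      rintro a ⟨h1, h2'⟩
      have ha : ∀ (i : ℕ) (hi : i < r - s) (hir : i < r) (j : Fin s),
          a ⟨i, hir⟩ j = W r s v i j := by
        intro i hi hir j
        rw [h2' (⟨i, hir⟩, j) (Or.inl hi), W, dif_pos hi]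
      have hEq := (equation_iff hrs hodd v a ha).mp h1
      ext i j
      by_cases hfree : (i : ℕ) < r - s ∨ (i : ℕ) + (j : ℕ) + 1 ≤ r
      · rw [h2' (i, j) hfree, Amat_free v i j hfree]
      · have hi1 : r - s ≤ (i : ℕ) := by omega
        have hij : r < (i : ℕ) + (j : ℕ) + 1 := by omega
        have h3 := hEq ⟨(i : ℕ) - (r - s), by omega⟩ j
        have hrow : (⟨r - s + ((⟨(i : ℕ) - (r - s), by omega⟩ : Fin s) : ℕ), by omega⟩ : Fin r)
            = i := Fin.ext (by show r - s + ((i : ℕ) - (r - s)) = (i : ℕ); omega)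
        rw [hrow] at h3
        have hfree2 : r - s + (j.rev : ℕ)
            + (((⟨(i : ℕ) - (r - s), by omega⟩ : Fin s).rev : ℕ)) + 1 ≤ r := by
          (try simp only [Fin.val_rev]); omega
        have h4 : a ⟨r - s + (j.rev : ℕ), by omega⟩ (⟨(i : ℕ) - (r - s), by omega⟩ : Fin s).rev
            = v ⟨(⟨r - s + (j.rev : ℕ), by omega⟩, (⟨(i : ℕ) - (r - s), by omega⟩ : Fin s).rev),
                Or.inr hfree2⟩ :=
          h2' (⟨r - s + (j.rev : ℕ), by omega⟩, (⟨(i : ℕ) - (r - s), by omega⟩ : Fin s).rev)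
            (Or.inr hfree2)
        rw [h4] at h3
        have hAb : Amat r s m v i j
            = v ⟨(⟨r - 1 - (j : ℕ), by omega⟩, ⟨r - 1 - (i : ℕ), by omega⟩),
                Or.inr (show r - 1 - (j : ℕ) + (r - 1 - (i : ℕ)) + 1 ≤ r by omega)⟩
              + G r s m v ⟨(i : ℕ) - (r - s), by omega⟩ j :=
          Amat_bot v (i : ℕ) i.isLt j hi1 hij
        rw [hAb]
        have e1 : v ⟨(⟨r - s + (j.rev : ℕ), by omega⟩,
              (⟨(i : ℕ) - (r - s), by omega⟩ : Fin s).rev), Or.inr hfree2⟩ =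
            v ⟨(⟨r - 1 - (j : ℕ), by omega⟩, ⟨r - 1 - (i : ℕ), by omega⟩),
              Or.inr (show r - 1 - (j : ℕ) + (r - 1 - (i : ℕ)) + 1 ≤ r by omega)⟩ :=
          v_eq v _ _ _ _ _ _ (by (try simp only [Fin.val_rev]); omega)
            (by (try simp only [Fin.val_rev]); omega)
        linear_combination h3 + e1
  · -- the cardinality
    rw [Nat.card_eq_fintype_card, Fintype.card_subtype, Finset.card_filter,
      Fintype.sum_prod_type]
    have hcount : ∀ (n c : ℕ), c ≤ n →
        (∑ j ∈ Finset.range n, if j < c then 1 else 0) = c := by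
      intro n
      induction n with
      | zero => intro c hc; simp; omega
      | succ n ih =>
        intro c hc
        rw [Finset.sum_range_succ]
        by_cases hcn : c ≤ n
        · rw [ih c hcn, if_neg (by omega)]; omega
        · have hc' : c = n + 1 := by omega
          rw [if_pos (by omega)]
          rw [Finset.sum_congr rfl (fun j hj => if_pos (by
            have := Finset.mem_range.mp hj; omega))]
          simp [hc']
    have hinner : ∀ i : Fin r,
        (∑ j : Fin s, if ((i : ℕ) < r - s ∨ (i : ℕ) + (j : ℕ) + 1 ≤ r) then 1 else 0)
          = if (i : ℕ) < r - s then s else r - (i : ℕ) := by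
      intro i
      by_cases hi : (i : ℕ) < r - s
      · rw [if_pos hi, Finset.sum_congr rfl (fun j _ => if_pos (Or.inl hi))]
        simp
      · rw [if_neg hi]
        have hri : r - (i : ℕ) ≤ s := by omega
        calc (∑ j : Fin s, if ((i : ℕ) < r - s ∨ (i : ℕ) + (j : ℕ) + 1 ≤ r) then 1 else 0)
            = ∑ j : Fin s, if ((j : ℕ) < r - (i : ℕ)) then 1 else 0 := by
              refine Finset.sum_congr rfl fun j _ => ?_
              exact if_congr (by omega) rfl rfl
          _ = ∑ j ∈ Finset.range s, if (j < r - (i : ℕ)) then 1 else 0 :=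
              Fin.sum_univ_eq_sum_range (fun n => if n < r - (i : ℕ) then 1 else 0) s
          _ = r - (i : ℕ) := hcount s (r - (i : ℕ)) hri
    rw [Finset.sum_congr rfl fun i _ => hinner i]
    rw [Fin.sum_univ_eq_sum_range (fun i => if i < r - s then s else r - i) r]
    have hsplit := Finset.sum_range_add (fun i => if i < r - s then s else r - i) (r - s) s
    rw [show r - s + s = r from by omega] at hsplit
    rw [hsplit]
    rw [Finset.sum_congr rfl (fun i hi => if_pos (Finset.mem_range.mp hi))]
    rw [Finset.sum_congr rfl (fun x hx => show (if r - s + x < r - s then s else r - (r - s + x))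
        = s - x from by
      rw [if_neg (by omega)]
      have := Finset.mem_range.mp hx; omega)]
    rw [Finset.sum_const, Finset.card_range, smul_eq_mul]
    have hrefl := Finset.sum_range_reflect (fun j => j + 1) s
    have hcongr : (∑ j ∈ Finset.range s, (s - j))
        = ∑ j ∈ Finset.range s, (s - 1 - j + 1) := by
      refine Finset.sum_congr rfl fun j hj => ?_
      have := Finset.mem_range.mp hj; omega
    rw [hcongr, hrefl, Finset.sum_add_distrib, Finset.sum_const, Finset.card_range,
      smul_eq_mul, mul_one]
    have hT := Finset.sum_range_id_mul_two s
    have hs : s * (s + 1) = s * (s - 1) + 2 * s := by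
      cases s with
      | zero => simp
      | succ n => simp only [Nat.add_sub_cancel]; ring
    have hcomm : (r - s) * s = s * (r - s) := Nat.mul_comm _ _
    omega
end
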